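/- Inverse metric of the exponential change: with *gᵢⱼ as in the exponential change formula (ρ = 0, ν = 1−τ), assuming ν ≠ 0 and m² + ν ≠ 0, the inverse satisfies *gⁱʲ = (e^{−2τ}/ν)[gⁱʲ − (m²+ν)⁻¹bⁱbʲ + (τ−ν)(m²+ν)⁻¹(bⁱlʲ + bʲlⁱ) − lⁱlʲ{(τ−ν)(m²+ν)⁻¹(m²+τ)}], i.e. Σⱼ *gⁱʲ·*gⱼₖ = δⁱₖ. -/

import Mathlib

open Matrix
set_option maxHeartbeats 8000000

section
variable {n : ℕ} (M : Matrix (Fin n) (Fin n) ℝ) (a b c d : Fin n → ℝ)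

theorem vmv_mul_vmv : vecMulVec a b * vecMulVec c d = (b ⬝ᵥ c) • vecMulVec a d := by
  ext i j
  simp [mul_apply, vecMulVec_apply, dotProduct, Finset.sum_mul, Finset.mul_sum]
  apply Finset.sum_congr rfl; intros; ring

theorem mul_vmv : M * vecMulVec a b = vecMulVec (M *ᵥ a) b := by
  ext i j
  simp [mul_apply, vecMulVec_apply, mulVec, dotProduct, Finset.sum_mul]
  apply Finset.sum_congr rfl; intros; ring

theorem vmv_mul : vecMulVec a b * M = vecMulVec a (b ᵥ* M) := by
  ext i j
  simp [mul_apply, vecMulVec_apply, vecMul, dotProduct, Finset.mul_sum]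
  apply Finset.sum_congr rfl; intros; ring
end

theorem exp_change_inverse_metric {n : ℕ} (g : Matrix (Fin n) (Fin n) ℝ)
    (hsymm : g.IsSymm) (hdet : IsUnit g.det)
    (l m : Fin n → ℝ) (τ : ℝ)
    (hll : l ⬝ᵥ (g *ᵥ l) = 1) (hml : m ⬝ᵥ (g *ᵥ l) = 0)
    (hν : (1 : ℝ) - τ ≠ 0) (hm2ν : m ⬝ᵥ (g *ᵥ m) + (1 - τ) ≠ 0) :
    let ν : ℝ := 1 - τ
    let m2 : ℝ := m ⬝ᵥ (g *ᵥ m)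
    let b : Fin n → ℝ := m + τ • l               -- contravariant components bⁱ
    let lo : Fin n → ℝ := g *ᵥ l                 -- covariant lᵢ
    let bo : Fin n → ℝ := g *ᵥ b                 -- covariant bᵢ
    let starg : Matrix (Fin n) (Fin n) ℝ := Matrix.of fun i j =>
      ν * Real.exp (2 * τ) * g i j
        + Real.exp (2 * τ) * (2 * τ ^ 2 - τ) * lo i * lo j
        + Real.exp (2 * τ) * (1 - 2 * τ) * (bo i * lo j + bo j * lo i)
        + 2 * Real.exp (2 * τ) * bo i * bo j
    let starginv : Matrix (Fin n) (Fin n) ℝ := Matrix.of fun i j =>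
      (Real.exp (-(2 * τ)) / ν) *
        (g⁻¹ i j - (m2 + ν)⁻¹ * b i * b j
          + (τ - ν) * (m2 + ν)⁻¹ * (b i * l j + b j * l i)
          - l i * l j * ((τ - ν) * (m2 + ν)⁻¹ * (m2 + τ)))
    starginv * starg = 1 := by
  intro ν m2 b lo bo starg starginv
  set E : ℝ := Real.exp (2 * τ) with hE
  have hEne : E ≠ 0 := Real.exp_ne_zero _
  have hEinv : Real.exp (-(2 * τ)) = E⁻¹ := Real.exp_neg _
  have hgT : gᵀ = g := hsymm
  have hinv : g⁻¹ * g = 1 := nonsing_inv_mul g hdet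
  have hgil : g⁻¹ *ᵥ lo = l := by
    show g⁻¹ *ᵥ (g *ᵥ l) = l
    rw [mulVec_mulVec, hinv, one_mulVec]
  have hgib : g⁻¹ *ᵥ bo = b := by
    show g⁻¹ *ᵥ (g *ᵥ b) = b
    rw [mulVec_mulVec, hinv, one_mulVec]
  have hlg : l ᵥ* g = lo := by
    conv_lhs => rw [← hgT]
    exact vecMul_transpose g l
  have hbg : b ᵥ* g = bo := by
    conv_lhs => rw [← hgT]
    exact vecMul_transpose g b
  have dml : m ⬝ᵥ lo = 0 := hml
  have dll : l ⬝ᵥ lo = 1 := hll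
  have dlm : l ⬝ᵥ (g *ᵥ m) = 0 := by
    rw [dotProduct_mulVec, hlg, dotProduct_comm]; exact hml
  have hbolin : bo = g *ᵥ m + τ • lo := by
    show g *ᵥ (m + τ • l) = _
    rw [mulVec_add, mulVec_smul]
  have dlb : l ⬝ᵥ bo = τ := by
    rw [hbolin, dotProduct_add, dotProduct_smul, dlm, smul_eq_mul, dll]; ring
  have dbl : b ⬝ᵥ lo = τ := by
    show (m + τ • l) ⬝ᵥ lo = τ
    rw [add_dotProduct, smul_dotProduct, dml, smul_eq_mul, dll]; ring
  have dbb : b ⬝ᵥ bo = m2 + τ ^ 2 := by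
    show (m + τ • l) ⬝ᵥ bo = _
    rw [add_dotProduct, smul_dotProduct, smul_eq_mul, dlb, hbolin, dotProduct_add,
      dotProduct_smul, dml, smul_eq_mul]
    show m2 + τ * 0 + τ * τ = m2 + τ ^ 2; ring
  set α : ℝ := (m2 + ν)⁻¹ with hα
  have hνne : ν ≠ 0 := hν
  have hm2νne : m2 + ν ≠ 0 := hm2ν
  set K : Matrix (Fin n) (Fin n) ℝ :=
    (m2 + ν) • g⁻¹ - vecMulVec b b + (τ - ν) • (vecMulVec b l + vecMulVec l b)
      - ((τ - ν) * (m2 + τ)) • vecMulVec l l with hK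
  set H : Matrix (Fin n) (Fin n) ℝ :=
    ν • g + (2 * τ ^ 2 - τ) • vecMulVec lo lo
      + (1 - 2 * τ) • (vecMulVec bo lo + vecMulVec lo bo) + (2:ℝ) • vecMulVec bo bo with hH
  have hfact : starginv = (E⁻¹ * ν⁻¹ * α) • K := by
    ext i j
    simp only [starginv, hK, of_apply, Matrix.smul_apply, Matrix.add_apply, Matrix.sub_apply,
      vecMulVec_apply, smul_eq_mul, hEinv, hα]
    field_simp
  have hfact2 : starg = E • H := by
    ext i j
    simp only [starg, hH, of_apply, Matrix.smul_apply, Matrix.add_apply, vecMulVec_apply,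
      smul_eq_mul]
    ring
  have key : K * H = (ν * (m2 + ν)) • (1 : Matrix (Fin n) (Fin n) ℝ) := by
    rw [hK, hH]
    have hνd : ν = 1 - τ := rfl
    clear_value bo lo b m2 ν
    subst hνd
    simp only [smul_add, smul_sub, add_mul, sub_mul, mul_add, mul_sub, smul_mul_assoc,
      mul_smul_comm, smul_smul, vmv_mul_vmv, mul_vmv g⁻¹, vmv_mul g, hinv, hgil, hgib, hlg, hbg,
      dll, dlb, dbl, dbb, Matrix.mul_smul, Matrix.smul_mul]
    ext i k
    simp only [Matrix.add_apply, Matrix.sub_apply, Matrix.smul_apply, smul_eq_mul,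
      vecMulVec_apply, Matrix.one_apply, nsmul_eq_mul, Nat.cast_ofNat]
    by_cases h : i = k
    · rw [if_pos h]; ring
    · rw [if_neg h]; ring
  rw [hfact, hfact2, Matrix.smul_mul, Matrix.mul_smul, smul_smul, key, smul_smul]
  have : E⁻¹ * ν⁻¹ * α * E * (ν * (m2 + ν)) = 1 := by
    rw [hα]; field_simp
  rw [this, one_smul]
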